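/- Let D be a dominion of player p in a subgame G, and let X ⊆ G with D ∩ X = ∅. Then D is also a dominion of p in the subgame G \ Attr_{p̄}(X, G); in particular D ∩ Attr_{p̄}(X, G) = ∅. -/

import Mathlib

theorem ofFn_dropLast {V : Type*} (ρ : ℕ → V) (m : ℕ) :
    (List.ofFn fun j : Fin (m+1) => ρ j).dropLast = List.ofFn fun j : Fin m => ρ j := by
  apply List.ext_getElem
  · simp
  · intro i h1 h2
    rw [List.getElem_dropLast, List.getElem_ofFn, List.getElem_ofFn]

theorem ofFn_getD {V : Type*} (ρ : ℕ → V) (m i : ℕ) (hi : i < m) (d : V) :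
    (List.ofFn fun j : Fin m => ρ j).getD i d = ρ i := by
  rw [List.getD_eq_getElem _ _ (by simpa), List.getElem_ofFn]

theorem ofFn_congr {V : Type*} {ρ g : ℕ → V} (m : ℕ) (h : ∀ j, j < m → ρ j = g j) :
    (List.ofFn fun j : Fin m => ρ j) = List.ofFn fun j : Fin m => g j := by
  congr 1; ext j; exact h j j.isLt

def followSeq {V : Type*} (f : List V → V) : ℕ → V
  | n => f (List.ofFn fun j : Fin n => followSeq f j)
termination_by n => n
decreasing_by exact j.isLt

theorem followSeq_eq {V : Type*} (f : List V → V) (n : ℕ) :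
    followSeq f n = f (List.ofFn fun j : Fin n => followSeq f j) := by
  rw [followSeq]



/-- A game graph: a finite directed graph without self-loops in which every
vertex has at least one successor, with vertices partitioned between the two
players (`owner v = true` means the vertex belongs to player Even). -/
structure GameGraph (V : Type*) [Fintype V] where
  E : V → V → Prop
  owner : V → Bool
  no_self_loops : ∀ v, ¬ E v v
  exists_succ : ∀ v, ∃ w, E v w

namespace GameGraph

variable {V : Type*} [Fintype V]

/-- Membership in the `p`-attractor of `S` inside the subgame induced by `U`. -/
inductive AttrIn (G : GameGraph V) (p : Bool) (U S : Set V) : V → Prop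
  | base {v : V} : v ∈ U → v ∈ S → AttrIn G p U S v
  | own {v w : V} : v ∈ U → G.owner v = p → G.E v w → w ∈ U →
      AttrIn G p U S w → AttrIn G p U S v
  | opp {v : V} : v ∈ U → G.owner v ≠ p →
      (∀ w, G.E v w → w ∈ U → AttrIn G p U S w) → AttrIn G p U S v

/-- The `p`-attractor of `S` in the subgame induced by `U`. -/
def attr (G : GameGraph V) (p : Bool) (U S : Set V) : Set V :=
  {v | G.AttrIn p U S v}

/-- `U` induces a valid subgame: every vertex of `U` has a successor in `U`. -/
def Subgame (G : GameGraph V) (U : Set V) : Prop :=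
  ∀ v ∈ U, ∃ w, G.E v w ∧ w ∈ U

/-- `S` is `p`-closed in the subgame `U`. -/
def Closed (G : GameGraph V) (p : Bool) (U S : Set V) : Prop :=
  G.attr (!p) U (U \ S) = U \ S

/-- A strategy (given the history so far and the current vertex, pick the next
vertex) is legal for player `p` in the subgame `U` if it always moves along an
edge and stays in `U`. -/
def Legal (G : GameGraph V) (p : Bool) (U : Set V) (σ : List V → V → V) : Prop :=
  ∀ l v, v ∈ U → G.owner v = p → G.E v (σ l v) ∧ σ l v ∈ U

/-- A play: an infinite path staying in `U`. -/
def ValidPlay (G : GameGraph V) (U : Set V) (ρ : ℕ → V) : Prop :=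
  (∀ i, ρ i ∈ U) ∧ ∀ i, G.E (ρ i) (ρ (i + 1))

/-- The play `ρ` agrees with the strategy `σ` of player `p`. -/
def Agrees (G : GameGraph V) (p : Bool) (σ : List V → V → V) (ρ : ℕ → V) : Prop :=
  ∀ i, G.owner (ρ i) = p →
    ρ (i + 1) = σ (List.ofFn fun j : Fin i => ρ j) (ρ i)

/-- Priority `c` occurs infinitely often in the play `ρ`. -/
def InfOcc (π : V → ℕ) (ρ : ℕ → V) (c : ℕ) : Prop :=
  ∀ N, ∃ i, N ≤ i ∧ π (ρ i) = c

/-- The play `ρ` is winning for player `p`: the highest priority occurring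
infinitely often has `p`'s parity. -/
def WinsPlay (π : V → ℕ) (p : Bool) (ρ : ℕ → V) : Prop :=
  ∃ c, InfOcc π ρ c ∧ ((c % 2 = 0) ↔ p = true) ∧ ∀ c', InfOcc π ρ c' → c' ≤ c

/-- `D` is a dominion of player `p` in the subgame `U`: from every vertex of
`D`, player `p` has a winning strategy (in `U`) agreeing only with plays that
stay forever in `D`. -/
def Dominion (G : GameGraph V) (π : V → ℕ) (p : Bool) (U D : Set V) : Prop :=
  D ⊆ U ∧ ∀ v ∈ D, ∃ σ : List V → V → V, G.Legal p U σ ∧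
    ∀ ρ : ℕ → V, ρ 0 = v → G.ValidPlay U ρ → G.Agrees p σ ρ →
      (∀ i, ρ i ∈ D) ∧ WinsPlay π p ρ

/-- The winning region of player `p`: vertices from which `p` has a winning
strategy in the whole game. -/
def WinRegion (G : GameGraph V) (π : V → ℕ) (p : Bool) : Set V :=
  {v | ∃ σ : List V → V → V, G.Legal p Set.univ σ ∧
    ∀ ρ : ℕ → V, ρ 0 = v → G.ValidPlay Set.univ ρ → G.Agrees p σ ρ →
      WinsPlay π p ρ}


open Classical in
noncomputable def pickIn (G : GameGraph V) (U : Set V) (u : V) : V :=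
  if h : ∃ w, G.E u w ∧ w ∈ U then h.choose else u

theorem pickIn_spec (G : GameGraph V) {U : Set V} {u : V}
    (h : ∃ w, G.E u w ∧ w ∈ U) : G.E u (G.pickIn U u) ∧ G.pickIn U u ∈ U := by
  rw [pickIn, dif_pos h]; exact h.choose_spec

noncomputable def extFun (G : GameGraph V) (p : Bool) (U : Set V)
    (σ : List V → V → V) (g : ℕ → V) (n : ℕ) : List V → V := fun l =>
  if l.length ≤ n then g l.length
  else if G.owner (l.getD (l.length - 1) (g 0)) = p then
    σ l.dropLast (l.getD (l.length - 1) (g 0))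
  else G.pickIn U (l.getD (l.length - 1) (g 0))

/-- Extension lemma: any finite `σ`-consistent path in `U` starting at a
dominion vertex `v` ends in `D` (extend it to an infinite `σ`-play). -/
theorem ext_mem (G : GameGraph V) (π : V → ℕ) (p : Bool) (U D : Set V)
    (hU : G.Subgame U) (σ : List V → V → V) (hσ : G.Legal p U σ) (v : V)
    (hwin : ∀ ρ : ℕ → V, ρ 0 = v → G.ValidPlay U ρ → G.Agrees p σ ρ →
      (∀ i, ρ i ∈ D) ∧ WinsPlay π p ρ)
    (g : ℕ → V) (n : ℕ) (h0 : g 0 = v)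
    (hgU : ∀ i, i ≤ n → g i ∈ U)
    (hgE : ∀ i, i < n → G.E (g i) (g (i+1)))
    (hgA : ∀ i, i < n → G.owner (g i) = p →
      g (i+1) = σ (List.ofFn fun j : Fin i => g j) (g i)) :
    g n ∈ D := by
  set ρ := followSeq (G.extFun p U σ g n) with hρdef
  have hρ : ∀ m, ρ m = G.extFun p U σ g n (List.ofFn fun j : Fin m => ρ j) :=
    fun m => followSeq_eq _ m
  have hpre : ∀ m, m ≤ n → ρ m = g m := by
    intro m hm
    rw [hρ m]
    unfold extFun
    simp only [List.length_ofFn]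
    rw [if_pos hm]
  have hstep : ∀ m, n ≤ m → ρ (m+1) =
      (if G.owner (ρ m) = p then σ (List.ofFn fun j : Fin m => ρ j) (ρ m)
       else G.pickIn U (ρ m)) := by
    intro m hm
    rw [hρ (m+1)]
    unfold extFun
    simp only [List.length_ofFn, Nat.add_sub_cancel]
    rw [if_neg (by omega), ofFn_getD ρ (m+1) m (by omega) (g 0), ofFn_dropLast]
  have hmem : ∀ m, ρ m ∈ U := by
    intro m
    induction m using Nat.strong_induction_on with
    | _ m ih =>
      match m, ih with
      | 0, ih => rw [hpre 0 (Nat.zero_le n)]; exact hgU 0 (Nat.zero_le n)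
      | (k+1), ih =>
        by_cases hk : k + 1 ≤ n
        · rw [hpre (k+1) hk]; exact hgU (k+1) hk
        · have hkU : ρ k ∈ U := ih k (Nat.lt_succ_self k)
          rw [hstep k (by omega)]
          by_cases ho : G.owner (ρ k) = p
          · rw [if_pos ho]; exact (hσ _ _ hkU ho).2
          · rw [if_neg ho]; exact (G.pickIn_spec (hU _ hkU)).2
  have hedge : ∀ m, G.E (ρ m) (ρ (m+1)) := by
    intro m
    by_cases hm : m < n
    · rw [hpre m (by omega), hpre (m+1) (by omega)]; exact hgE m hm
    · rw [hstep m (by omega)]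
      by_cases ho : G.owner (ρ m) = p
      · rw [if_pos ho]; exact (hσ _ _ (hmem m) ho).1
      · rw [if_neg ho]; exact (G.pickIn_spec (hU _ (hmem m))).1
  have hagr : G.Agrees p σ ρ := by
    intro i hoi
    by_cases hi : i < n
    · rw [hpre (i+1) (by omega), hpre i (by omega),
        ofFn_congr i (fun j hj => hpre j (by omega))] at *
      exact hgA i hi hoi
    · rw [hstep i (by omega), if_pos hoi]
  have := hwin ρ (by rw [hpre 0 (Nat.zero_le n), h0]) ⟨hmem, hedge⟩ hagr
  have := this.1 n
  rwa [hpre n le_rfl] at this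

/-- No vertex of the dominion lies in the opponent's attractor of `X`. -/
theorem not_mem_attr (G : GameGraph V) (π : V → ℕ) (p : Bool)
    (U D X : Set V) (hU : G.Subgame U) (hD : G.Dominion π p U D)
    (hdisj : D ∩ X = ∅) :
    ∀ v, G.AttrIn (!p) U X v → v ∉ D := by
  intro v hv
  induction hv with
  | @base v hvU hvX =>
    intro hvD
    exact absurd hdisj (by
      apply Set.Nonempty.ne_empty
      exact ⟨v, hvD, hvX⟩)
  | @own v w hvU hown hE hwU _ ih =>
    intro hvD
    obtain ⟨σ, hσ, hwin⟩ := hD.2 v hvD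
    have hw : w ∈ D := by
      have := G.ext_mem π p U D hU σ hσ v hwin
        (fun i => if i = 0 then v else w) 1 (by simp)
        (by intro i hi; interval_cases i <;> simp [hvU, hwU])
        (by intro i hi; interval_cases i; simpa using hE)
        (by
          intro i hi ho
          interval_cases i
          norm_num at ho
          rw [hown] at ho
          exact absurd ho (Bool.not_ne_self p))
      simpa using this
    exact ih hw
  | @opp v hvU hown ha ih =>
    intro hvD
    obtain ⟨σ, hσ, hwin⟩ := hD.2 v hvD
    have hop : G.owner v = p := by
      cases p <;> cases h : G.owner v <;> simp_all
    obtain ⟨hE, hwU⟩ := hσ [] v hvU hop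
    set w := σ [] v with hwdef
    have hw : w ∈ D := by
      have := G.ext_mem π p U D hU σ hσ v hwin
        (fun i => if i = 0 then v else w) 1 (by simp)
        (by intro i hi; interval_cases i <;> simp [hvU, hwU])
        (by intro i hi; interval_cases i; simpa using hE)
        (by intro i hi ho; interval_cases i; simp; exact hwdef)
      simpa using this
    exact ih w hE hwU hw

/-- The complement of an attractor is a subgame. -/
theorem subgame_diff_attr (G : GameGraph V) (p : Bool) (U X : Set V)
    (hU : G.Subgame U) : G.Subgame (U \ G.attr (!p) U X) := by
  intro u hu
  obtain ⟨huU, huA⟩ := hu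
  by_cases ho : G.owner u = !p
  · obtain ⟨w, hE, hwU⟩ := hU u huU
    refine ⟨w, hE, hwU, fun hw => huA ?_⟩
    exact AttrIn.own huU ho hE hwU hw
  · by_contra hc
    push_neg at hc
    apply huA
    refine AttrIn.opp huU ho ?_
    intro w hE hwU
    by_contra hw
    exact (hc w hE) ⟨hwU, hw⟩

/-- Lemma 1: if a dominion `D` of player `p` in a subgame `U` does not
intersect `X ⊆ U`, then `D` is also a dominion of `p` in
`U \ Attr_{p̄}(X, U)`; in particular `D` does not intersect the attractor. -/
theorem dominion_of_attr_disjoint (G : GameGraph V) (π : V → ℕ) (p : Bool)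
    (U D X : Set V) (hU : G.Subgame U) (hD : G.Dominion π p U D)
    (hX : X ⊆ U) (hdisj : D ∩ X = ∅) :
    G.Dominion π p (U \ G.attr (!p) U X) D ∧ D ∩ G.attr (!p) U X = ∅ := by
  classical
  have hnot := G.not_mem_attr π p U D X hU hD hdisj
  have hdisj2 : D ∩ G.attr (!p) U X = ∅ := by
    ext u
    simp only [Set.mem_inter_iff, Set.mem_empty_iff_false, iff_false, not_and]
    intro huD hua
    exact hnot u hua huD
  set U' := U \ G.attr (!p) U X with hU'def
  have hsub' : G.Subgame U' := G.subgame_diff_attr p U X hU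
  have hDU' : D ⊆ U' := fun u hu => ⟨hD.1 hu, fun ha => hnot u ha hu⟩
  refine ⟨⟨hDU', ?_⟩, hdisj2⟩
  intro v hv
  obtain ⟨σ, hσ, hwin⟩ := hD.2 v hv
  set σ' : List V → V → V := fun l u =>
    if G.E u (σ l u) ∧ σ l u ∈ U' then σ l u else G.pickIn U' u with hσ'def
  have hσ'pos : ∀ l u, G.E u (σ l u) ∧ σ l u ∈ U' → σ' l u = σ l u := by
    intro l u h
    rw [hσ'def]
    exact if_pos h
  have hσ'neg : ∀ l u, ¬ (G.E u (σ l u) ∧ σ l u ∈ U') → σ' l u = G.pickIn U' u := by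
    intro l u h
    rw [hσ'def]
    exact if_neg h
  have hleg' : G.Legal p U' σ' := by
    intro l u huU' hou
    by_cases h : G.E u (σ l u) ∧ σ l u ∈ U'
    · rw [hσ'pos l u h]; exact h
    · rw [hσ'neg l u h]; exact G.pickIn_spec (hsub' u huU')
  refine ⟨σ', hleg', ?_⟩
  intro ρ hρ0 hval' hagr'
  have hvalU : G.ValidPlay U ρ := ⟨fun i => (hval'.1 i).1, hval'.2⟩
  have key : ∀ n, ∀ i, i < n → G.owner (ρ i) = p →
      ρ (i+1) = σ (List.ofFn fun j : Fin i => ρ j) (ρ i) := by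
    intro n
    induction n with
    | zero => intro i hi; omega
    | succ k ih =>
      intro i hik hpo
      rcases Nat.lt_or_ge i k with h | h
      · exact ih i h hpo
      · have hik' : i = k := by omega
        subst hik'
        set u := σ (List.ofFn fun j : Fin i => ρ j) (ρ i) with hudef
        have hedge : G.E (ρ i) u := (hσ _ _ (hvalU.1 i) hpo).1
        have hnextD : u ∈ D := by
          have hg := G.ext_mem π p U D hU σ hσ v hwin
            (fun j => if j ≤ i then ρ j else u) (i+1)
            (by simp [hρ0])
            (by
              intro j hj
              by_cases hji : j ≤ i
              · simp only [if_pos hji]; exact hvalU.1 j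
              · simp only [if_neg hji]
                exact (hσ _ _ (hvalU.1 i) hpo).2)
            (by
              intro j hj
              rcases Nat.lt_or_ge j i with h2 | h2
              · simp only [if_pos (by omega : j ≤ i), if_pos (by omega : j+1 ≤ i)]
                exact hvalU.2 j
              · have hji : j = i := by omega
                subst hji
                simp only [if_pos le_rfl, if_neg (by omega : ¬ j+1 ≤ j)]
                exact hedge)
            (by
              intro j hj ho
              have hlist := ofFn_congr (V := V)
                (ρ := fun m => if m ≤ i then ρ m else u) (g := ρ) (m := j)
                (fun l hl => if_pos (by omega : l ≤ i))
              rcases Nat.lt_or_ge j i with h2 | h2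
              · simp only [if_pos (by omega : j ≤ i), if_pos (by omega : j+1 ≤ i)] at ho ⊢
                rw [hlist]
                exact ih j h2 ho
              · have hji : j = i := by omega
                subst hji
                simp only [if_pos le_rfl, if_neg (by omega : ¬ j+1 ≤ j)]
                rw [hlist])
          simpa only [if_neg (by omega : ¬ i+1 ≤ i)] using hg
        have hu' : σ' (List.ofFn fun j : Fin i => ρ j) (ρ i) = u :=
          hσ'pos _ _ ⟨hedge, hDU' hnextD⟩
        rw [hagr' i hpo, hu']
  have hagrσ : G.Agrees p σ ρ := fun i h => key (i+1) i (Nat.lt_succ_self i) h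
  exact hwin ρ hρ0 hvalU hagrσ

end GameGraph
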